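/- For m ≥ 2 and n ≥ 1, the inclusion G(S^m; A, B, n−1) ↪ G(S^m; A, A, n) (obtained as the fiber of the fibration sending (x_1,...,x_n) to x_n over the contractible base S^m − {A}) is a homotopy equivalence. -/

import Mathlib

open Metric

namespace ConfigAux

variable (m : ℕ)

abbrev S (m : ℕ) := Metric.sphere (0 : EuclideanSpace ℝ (Fin (m+1))) 1

noncomputable def chart (A : S m) : {x : S m // x ≠ A} ≃ₜ EuclideanSpace ℝ (Fin m) :=
  haveI : Fact (Module.finrank ℝ (EuclideanSpace ℝ (Fin (m+1))) = m + 1) :=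
    ⟨finrank_euclideanSpace_fin⟩
  (Homeomorph.setCongr (show {x : S m | x ≠ A} = (stereographic' m A).source by
      rw [stereographic'_source]; ext x; simp)).trans <|
    (stereographic' m A).toHomeomorphSourceTarget.trans <|
      (Homeomorph.setCongr (stereographic'_target A)).trans (Homeomorph.Set.univ _)

variable (A B : S m) (hBA : B ≠ A)

noncomputable def vb (b : {x : S m // x ≠ A}) : EuclideanSpace ℝ (Fin m) :=
  chart m A ⟨B, hBA⟩ - chart m A b

noncomputable def Rb (b : {x : S m // x ≠ A}) : ℝ := 2 * ‖vb m A B hBA b‖ + 1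

lemma Rb_pos (b : {x : S m // x ≠ A}) : 0 < Rb m A B hBA b := by
  unfold Rb; positivity

noncomputable def F (b : {x : S m // x ≠ A}) (t : ℝ) (z : EuclideanSpace ℝ (Fin m)) :
    EuclideanSpace ℝ (Fin m) :=
  z + (t * max (1 - ‖z - chart m A b‖ / Rb m A B hBA b) 0) • vb m A B hBA b

lemma F_zero (b) (z) : F m A B hBA b 0 z = z := by simp [F]

lemma F_self (b) : F m A B hBA b 1 (chart m A b) = chart m A ⟨B, hBA⟩ := by
  simp [F, vb]

lemma F_B (t : ℝ) (z) : F m A B hBA ⟨B, hBA⟩ t z = z := by simp [F, vb]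

lemma F_far (b) (t : ℝ) (z) (h : Rb m A B hBA b ≤ ‖z - chart m A b‖) :
    F m A B hBA b t z = z := by
  have hR := Rb_pos m A B hBA b
  have : 1 - ‖z - chart m A b‖ / Rb m A B hBA b ≤ 0 := by
    rw [sub_nonpos, le_div_iff₀ hR]; linarith
  simp [F, max_eq_right this]

lemma F_inj (b) (t : ℝ) (ht : |t| ≤ 1) {z z' : EuclideanSpace ℝ (Fin m)}
    (h : F m A B hBA b t z = F m A B hBA b t z') : z = z' := by
  set p := (chart m A b : EuclideanSpace ℝ (Fin m))
  set R := Rb m A B hBA b with hRdef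
  set v := vb m A B hBA b
  have hR : 0 < R := Rb_pos m A B hBA b
  have hvR : ‖v‖ / R ≤ 1 / 2 := by
    rw [div_le_div_iff₀ hR (by norm_num)]
    have : R = 2 * ‖v‖ + 1 := hRdef
    nlinarith [norm_nonneg v]
  set L := t * max (1 - ‖z - p‖ / R) 0
  set L' := t * max (1 - ‖z' - p‖ / R) 0
  have hzz : z - z' = (L' - L) • v := by
    have : z + L • v = z' + L' • v := h
    rw [sub_smul]
    abel_nf
    linear_combination (norm := module) this
  have hLL : |L' - L| ≤ ‖z - z'‖ / R := by
    have h1 : |L' - L| ≤ |t| * |max (1 - ‖z' - p‖ / R) 0 - max (1 - ‖z - p‖ / R) 0| := by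
      rw [← mul_sub, abs_mul]
    have h2 : |max (1 - ‖z' - p‖ / R) 0 - max (1 - ‖z - p‖ / R) 0|
        ≤ |(1 - ‖z' - p‖ / R) - (1 - ‖z - p‖ / R)| := abs_max_sub_max_le_abs _ _ _
    have h3 : |(1 - ‖z' - p‖ / R) - (1 - ‖z - p‖ / R)| = |‖z - p‖ - ‖z' - p‖| / R := by
      have e : (1 - ‖z' - p‖ / R) - (1 - ‖z - p‖ / R) = (‖z - p‖ - ‖z' - p‖) / R := by ring
      rw [e, abs_div, abs_of_pos hR]
    have h4 : |‖z - p‖ - ‖z' - p‖| ≤ ‖z - z'‖ := by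
      have := abs_norm_sub_norm_le (z - p) (z' - p)
      simpa using this
    calc |L' - L| ≤ |t| * |max (1 - ‖z' - p‖ / R) 0 - max (1 - ‖z - p‖ / R) 0| := h1
      _ ≤ 1 * |(1 - ‖z' - p‖ / R) - (1 - ‖z - p‖ / R)| := by
          apply mul_le_mul ht h2 (abs_nonneg _) zero_le_one
      _ = |‖z - p‖ - ‖z' - p‖| / R := by rw [one_mul, h3]
      _ ≤ ‖z - z'‖ / R := by gcongr
  have hnorm : ‖z - z'‖ ≤ (‖z - z'‖ / R) * ‖v‖ := by
    calc ‖z - z'‖ = |L' - L| * ‖v‖ := by rw [hzz, norm_smul, Real.norm_eq_abs]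
      _ ≤ (‖z - z'‖ / R) * ‖v‖ := by gcongr
  have : ‖z - z'‖ ≤ ‖z - z'‖ * (1/2) := by
    calc ‖z - z'‖ ≤ (‖z - z'‖ / R) * ‖v‖ := hnorm
      _ = ‖z - z'‖ * (‖v‖ / R) := by ring
      _ ≤ ‖z - z'‖ * (1/2) := by
          apply mul_le_mul_of_nonneg_left hvR (norm_nonneg _)
  have hz0 : ‖z - z'‖ = 0 := by
    have := norm_nonneg (z - z')
    linarith
  have := norm_sub_eq_zero_iff.mp hz0
  exact this


lemma chart_cont : Continuous fun b : {x : S m // x ≠ A} => (chart m A b : EuclideanSpace ℝ (Fin m)) :=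
  (chart m A).continuous

lemma F_cont : Continuous (fun p : {x : S m // x ≠ A} × ℝ × EuclideanSpace ℝ (Fin m) =>
    F m A B hBA p.1 p.2.1 p.2.2) := by
  have hc := chart_cont m A
  have hv : Continuous fun b : {x : S m // x ≠ A} => vb m A B hBA b :=
    continuous_const.sub hc
  have hR : Continuous fun b : {x : S m // x ≠ A} => Rb m A B hBA b :=
    (continuous_const.mul hv.norm).add continuous_const
  have hq : Continuous fun p : {x : S m // x ≠ A} × ℝ × EuclideanSpace ℝ (Fin m) =>
      ‖p.2.2 - chart m A p.1‖ / Rb m A B hBA p.1 :=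
    ((continuous_snd.snd.sub (hc.comp continuous_fst)).norm).div (hR.comp continuous_fst)
      (fun p => (Rb_pos m A B hBA p.1).ne')
  have hL : Continuous fun p : {x : S m // x ≠ A} × ℝ × EuclideanSpace ℝ (Fin m) =>
      p.2.1 * max (1 - ‖p.2.2 - chart m A p.1‖ / Rb m A B hBA p.1) 0 :=
    continuous_snd.fst.mul ((continuous_const.sub hq).max continuous_const)
  exact continuous_snd.snd.add (hL.smul (hv.comp continuous_fst))

open scoped Classical in
noncomputable def psi (b : {x : S m // x ≠ A}) (t : ℝ) (x : S m) : S m :=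
  if hx : x = A then A
  else ((chart m A).symm (F m A B hBA b t (chart m A ⟨x, hx⟩)) : {x : S m // x ≠ A}).1

lemma psi_A (b) (t : ℝ) : psi m A B hBA b t A = A := dif_pos rfl

lemma psi_ne (b) (t : ℝ) (x : S m) (hx : x ≠ A) :
    psi m A B hBA b t x
      = ((chart m A).symm (F m A B hBA b t (chart m A ⟨x, hx⟩)) : {x : S m // x ≠ A}).1 :=
  dif_neg hx

lemma psi_zero (b) (x : S m) : psi m A B hBA b 0 x = x := by
  by_cases hx : x = A
  · rw [hx, psi_A]
  · rw [psi_ne m A B hBA b 0 x hx, F_zero, Homeomorph.symm_apply_apply]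

lemma psi_one (b : {x : S m // x ≠ A}) : psi m A B hBA b 1 b.1 = B := by
  rw [psi_ne m A B hBA b 1 b.1 b.2]
  have : (⟨b.1, b.2⟩ : {x : S m // x ≠ A}) = b := rfl
  rw [this, F_self, Homeomorph.symm_apply_apply]

lemma psi_Bfix (t : ℝ) (x : S m) : psi m A B hBA ⟨B, hBA⟩ t x = x := by
  by_cases hx : x = A
  · rw [hx, psi_A]
  · rw [psi_ne m A B hBA _ t x hx, F_B, Homeomorph.symm_apply_apply]

lemma psi_ne_A (b) (t : ℝ) (x : S m) (hx : x ≠ A) : psi m A B hBA b t x ≠ A := by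
  rw [psi_ne m A B hBA b t x hx]
  exact ((chart m A).symm _).2

lemma psi_inj (b) (t : ℝ) (ht : |t| ≤ 1) {x x' : S m}
    (h : psi m A B hBA b t x = psi m A B hBA b t x') : x = x' := by
  by_cases hx : x = A <;> by_cases hx' : x' = A
  · rw [hx, hx']
  · exfalso; rw [hx, psi_A] at h; exact psi_ne_A m A B hBA b t x' hx' h.symm
  · exfalso; rw [hx', psi_A] at h; exact psi_ne_A m A B hBA b t x hx h
  · rw [psi_ne m A B hBA b t x hx, psi_ne m A B hBA b t x' hx'] at h
    have h2 := Subtype.ext h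
    have h3 := (chart m A).symm.injective h2
    have h4 := F_inj m A B hBA b t ht h3
    have h5 := (chart m A).injective h4
    exact congrArg Subtype.val h5


lemma psi_cont : Continuous (fun p : {x : S m // x ≠ A} × ℝ × S m =>
    psi m A B hBA p.1 p.2.1 p.2.2) := by
  rw [continuous_iff_continuousAt]
  intro p₀
  by_cases hx : p₀.2.2 = A
  · -- near the pole A, psi is eventually the projection
    set b₀ := p₀.1
    set M : ℝ := ‖(chart m A b₀ : EuclideanSpace ℝ (Fin m))‖ + 1
    set K : ℝ := 3 * M + 2 * ‖(chart m A ⟨B, hBA⟩ : EuclideanSpace ℝ (Fin m))‖ + 1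
    set C : Set (S m) :=
      Subtype.val '' ((chart m A).symm '' Metric.closedBall 0 K) with hC
    have hCcomp : IsCompact C :=
      ((isCompact_closedBall (0 : EuclideanSpace ℝ (Fin m)) K).image
        (chart m A).symm.continuous).image continuous_subtype_val
    have hCclosed : IsClosed C := hCcomp.isClosed
    have hAC : A ∉ C := by
      rintro ⟨x, -, hx2⟩
      exact x.2 hx2
    set W : Set ({x : S m // x ≠ A} × ℝ × S m) :=
      {p | ‖(chart m A p.1 : EuclideanSpace ℝ (Fin m))‖ < M} ∩
        {p | p.2.2 ∈ Cᶜ} with hW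
    have hWopen : IsOpen W := by
      apply IsOpen.inter
      · exact isOpen_lt (((chart m A).continuous.comp continuous_fst).norm) continuous_const
      · exact hCclosed.isOpen_compl.preimage continuous_snd.snd
    have hWmem : W ∈ nhds p₀ := by
      apply hWopen.mem_nhds
      constructor
      · simp [M]
        exact lt_add_one _
      · show p₀.2.2 ∈ Cᶜ
        rw [hx]
        exact hAC
    have heq : ∀ p ∈ W, psi m A B hBA p.1 p.2.1 p.2.2 = p.2.2 := by
      rintro p ⟨hb, hv⟩
      have hb' : ‖(chart m A p.1 : EuclideanSpace ℝ (Fin m))‖ < M := hb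
      by_cases hxp : p.2.2 = A
      · rw [hxp, psi_A]
      · rw [psi_ne m A B hBA _ _ _ hxp]
        have hnotball : (chart m A ⟨p.2.2, hxp⟩ : EuclideanSpace ℝ (Fin m)) ∉
            Metric.closedBall (0 : EuclideanSpace ℝ (Fin m)) K := by
          intro hmem
          apply hv
          exact ⟨⟨p.2.2, hxp⟩, ⟨chart m A ⟨p.2.2, hxp⟩, hmem,
            (chart m A).symm_apply_apply _⟩, rfl⟩
        have hKlt : K < ‖(chart m A ⟨p.2.2, hxp⟩ : EuclideanSpace ℝ (Fin m))‖ := by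
          simpa [Metric.mem_closedBall, dist_zero_right, not_le] using hnotball
        have hfar : Rb m A B hBA p.1 ≤
            ‖(chart m A ⟨p.2.2, hxp⟩ : EuclideanSpace ℝ (Fin m)) - chart m A p.1‖ := by
          have h1 : ‖vb m A B hBA p.1‖ ≤
              ‖(chart m A ⟨B, hBA⟩ : EuclideanSpace ℝ (Fin m))‖ + M := by
            have := norm_sub_le (chart m A ⟨B, hBA⟩ : EuclideanSpace ℝ (Fin m))
              (chart m A p.1)
            unfold vb
            linarith
          have h2 : ‖(chart m A ⟨p.2.2, hxp⟩ : EuclideanSpace ℝ (Fin m))‖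
              - ‖(chart m A p.1 : EuclideanSpace ℝ (Fin m))‖ ≤
              ‖(chart m A ⟨p.2.2, hxp⟩ : EuclideanSpace ℝ (Fin m)) - chart m A p.1‖ :=
            norm_sub_norm_le _ _
          have hM0 : (0:ℝ) < M := by positivity
          unfold Rb
          simp only [K] at hKlt
          linarith
        rw [F_far m A B hBA _ _ _ hfar, Homeomorph.symm_apply_apply]
    have hev : (fun p : {x : S m // x ≠ A} × ℝ × S m => psi m A B hBA p.1 p.2.1 p.2.2)
        =ᶠ[nhds p₀] (fun p => p.2.2) :=
      Filter.eventuallyEq_of_mem hWmem heq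
    exact (continuous_snd.snd.continuousAt).congr hev.symm
  · -- away from the pole, psi is a composite of continuous maps
    have hopen : IsOpen {p : {x : S m // x ≠ A} × ℝ × S m | p.2.2 ≠ A} :=
      isOpen_compl_singleton.preimage continuous_snd.snd
    apply ContinuousOn.continuousAt _ (hopen.mem_nhds hx)
    rw [continuousOn_iff_continuous_restrict]
    have hres : (Set.domRestrict {p : {x : S m // x ≠ A} × ℝ × S m | p.2.2 ≠ A}
        (fun p => psi m A B hBA p.1 p.2.1 p.2.2)) = fun q =>
          ((chart m A).symm (F m A B hBA q.1.1 q.1.2.1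
            (chart m A ⟨q.1.2.2, q.2⟩)) : {x : S m // x ≠ A}).1 := by
      funext q
      exact psi_ne m A B hBA q.1.1 q.1.2.1 q.1.2.2 q.2
    rw [hres]
    have hq2 : Continuous fun q : {p : {x : S m // x ≠ A} × ℝ × S m | p.2.2 ≠ A} =>
        (⟨q.1.2.2, q.2⟩ : {x : S m // x ≠ A}) :=
      Continuous.subtype_mk (continuous_subtype_val.snd.snd) _
    have hF : Continuous fun q : {p : {x : S m // x ≠ A} × ℝ × S m | p.2.2 ≠ A} =>
        F m A B hBA q.1.1 q.1.2.1 (chart m A ⟨q.1.2.2, q.2⟩) :=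
      (F_cont m A B hBA).comp
        (continuous_subtype_val.fst.prodMk
          (continuous_subtype_val.snd.fst.prodMk ((chart m A).continuous.comp hq2)))
    exact continuous_subtype_val.comp ((chart m A).symm.continuous.comp hF)


section Config

variable (n : ℕ)

def Yt : Type :=
  {y : Fin (n - 1) → S m //
    (∀ h : 0 < n - 1, y ⟨0, h⟩ ≠ A) ∧
    (∀ h : 0 < n - 1, y ⟨n - 2, by omega⟩ ≠ B) ∧
    (∀ i : ℕ, ∀ h : i + 1 < n - 1, y ⟨i, by omega⟩ ≠ y ⟨i + 1, h⟩)}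

variable (hn : 1 ≤ n)

def Xt : Type :=
  {x : Fin n → S m //
    x ⟨0, by omega⟩ ≠ A ∧ x ⟨n - 1, by omega⟩ ≠ A ∧
    (∀ i : ℕ, ∀ h : i + 1 < n, x ⟨i, by omega⟩ ≠ x ⟨i + 1, h⟩)}

noncomputable instance : TopologicalSpace (Yt m A B n) := by unfold Yt; infer_instance
noncomputable instance : TopologicalSpace (Xt m A n hn) := by unfold Xt; infer_instance

/-- the inclusion of the fiber -/
noncomputable def eFun (y : Yt m A B n) : Xt m A n hn := by
  refine ⟨fun i => if h : (i : ℕ) < n - 1 then y.1 ⟨i, h⟩ else B, ?_, ?_, ?_⟩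
  · show (if h : (0:ℕ) < n - 1 then y.1 ⟨0, h⟩ else B) ≠ A
    by_cases h0 : 0 < n - 1
    · rw [dif_pos h0]; exact y.2.1 h0
    · rw [dif_neg h0]; exact hBA
  · show (if h : (n-1:ℕ) < n - 1 then y.1 ⟨n-1, h⟩ else B) ≠ A
    rw [dif_neg (by omega : ¬ (n - 1 < n - 1))]
    exact hBA
  · intro i h
    show (if h : (i:ℕ) < n - 1 then y.1 ⟨i, h⟩ else B)
        ≠ (if h : (i+1:ℕ) < n - 1 then y.1 ⟨i+1, h⟩ else B)
    by_cases h1 : i + 1 < n - 1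
    · rw [dif_pos (by omega : i < n - 1), dif_pos h1]
      exact y.2.2.2 i h1
    · have hi : i = n - 2 := by omega
      have h0 : 0 < n - 1 := by omega
      rw [dif_pos (by omega : i < n - 1), dif_neg h1]
      have : (⟨i, by omega⟩ : Fin (n - 1)) = ⟨n - 2, by omega⟩ := by
        apply Fin.ext; simp [hi]
      rw [this]
      exact y.2.2.1 h0

lemma eFun_cont : Continuous (eFun m A B hBA n hn) := by
  apply Continuous.subtype_mk
  apply continuous_pi
  intro i
  by_cases h : (i : ℕ) < n - 1
  · simp only [dif_pos h]
    exact (continuous_apply (⟨(i:ℕ), h⟩ : Fin (n-1))).comp continuous_subtype_val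
  · simp only [dif_neg h]
    exact continuous_const

/-- the last point of a configuration, as a point of the sphere minus A -/
def lastPt (x : Xt m A n hn) : {z : S m // z ≠ A} :=
  ⟨x.1 ⟨n - 1, by omega⟩, x.2.2.1⟩

lemma lastPt_cont : Continuous (lastPt m A n hn) :=
  Continuous.subtype_mk
    ((continuous_apply (⟨n - 1, by omega⟩ : Fin n)).comp continuous_subtype_val) _

/-- the homotopy inverse -/
noncomputable def gFun (x : Xt m A n hn) : Yt m A B n := by
  refine ⟨fun i => psi m A B hBA (lastPt m A n hn x) 1 (x.1 ⟨i, by omega⟩), ?_, ?_, ?_⟩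
  · intro h0
    exact psi_ne_A m A B hBA _ 1 _ x.2.1
  · intro h0
    intro hcon
    rw [show ((1:ℝ)) = ((1:ℝ)) from rfl] at hcon
    have hb : psi m A B hBA (lastPt m A n hn x) 1 (lastPt m A n hn x).1 = B :=
      psi_one m A B hBA _
    have := psi_inj m A B hBA (lastPt m A n hn x) 1 (by norm_num)
      (hcon.trans hb.symm)
    have hadj := x.2.2.2 (n - 2) (by omega)
    apply hadj
    have e1 : (⟨n - 2 + 1, by omega⟩ : Fin n) = ⟨n - 1, by omega⟩ := by
      apply Fin.ext; simp; omega
    rw [e1]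
    exact this
  · intro i h
    intro hcon
    have := psi_inj m A B hBA (lastPt m A n hn x) 1 (by norm_num) hcon
    exact x.2.2.2 i (by omega) this

lemma gFun_cont : Continuous (gFun m A B hBA n hn) := by
  apply Continuous.subtype_mk
  apply continuous_pi
  intro i
  exact (psi_cont m A B hBA).comp
    ((lastPt_cont m A n hn).prodMk (continuous_const.prodMk
      ((continuous_apply (⟨(i:ℕ), by omega⟩ : Fin n)).comp continuous_subtype_val)))


lemma g_comp_e (y : Yt m A B n) :
    gFun m A B hBA n hn (eFun m A B hBA n hn y) = y := by
  apply Subtype.ext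
  funext i
  show psi m A B hBA (lastPt m A n hn (eFun m A B hBA n hn y)) 1
      ((eFun m A B hBA n hn y).1 ⟨(i : ℕ), by omega⟩) = y.1 i
  have hlast : lastPt m A n hn (eFun m A B hBA n hn y) = ⟨B, hBA⟩ := by
    apply Subtype.ext
    show (if h : (n - 1 : ℕ) < n - 1 then y.1 ⟨n - 1, h⟩ else B) = B
    exact dif_neg (by omega)
  rw [hlast, psi_Bfix]
  show (if h : (i : ℕ) < n - 1 then y.1 ⟨(i : ℕ), h⟩ else B) = y.1 i
  rw [dif_pos i.isLt]

lemma abs_coe_le (t : unitInterval) : |(t : ℝ)| ≤ 1 :=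
  abs_le.mpr ⟨by linarith [t.2.1], t.2.2⟩

noncomputable def HMap : C(unitInterval × Xt m A n hn, Xt m A n hn) := by
  refine ⟨fun p => ⟨fun i => psi m A B hBA (lastPt m A n hn p.2) p.1 (p.2.1 i),
    ?_, ?_, ?_⟩, ?_⟩
  · exact psi_ne_A m A B hBA _ _ _ p.2.2.1
  · exact psi_ne_A m A B hBA _ _ _ p.2.2.2.1
  · intro i h hcon
    exact p.2.2.2.2 i h (psi_inj m A B hBA _ _ (abs_coe_le p.1) hcon)
  · apply Continuous.subtype_mk
    apply continuous_pi
    intro i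
    exact (psi_cont m A B hBA).comp
      (((lastPt_cont m A n hn).comp continuous_snd).prodMk
        ((continuous_subtype_val.comp continuous_fst).prodMk
          ((continuous_apply i).comp (continuous_subtype_val.comp continuous_snd))))

lemma HMap_zero (x : Xt m A n hn) : HMap m A B hBA n hn (0, x) = x := by
  apply Subtype.ext
  funext i
  exact psi_zero m A B hBA _ _

lemma HMap_one (x : Xt m A n hn) :
    HMap m A B hBA n hn (1, x) = eFun m A B hBA n hn (gFun m A B hBA n hn x) := by
  apply Subtype.ext
  funext i
  show psi m A B hBA (lastPt m A n hn x) 1 (x.1 i)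
      = (if h : (i : ℕ) < n - 1
          then psi m A B hBA (lastPt m A n hn x) 1 (x.1 ⟨(i : ℕ), by omega⟩) else B)
  by_cases h : (i : ℕ) < n - 1
  · rw [dif_pos h]
  · rw [dif_neg h]
    have hi : i = ⟨n - 1, by omega⟩ := by
      apply Fin.ext
      have := i.isLt
      simp
      omega
    rw [hi]
    exact psi_one m A B hBA (lastPt m A n hn x)

noncomputable def theEquiv :
    ContinuousMap.HomotopyEquiv (Yt m A B n) (Xt m A n hn) where
  toFun := ⟨eFun m A B hBA n hn, eFun_cont m A B hBA n hn⟩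
  invFun := ⟨gFun m A B hBA n hn, gFun_cont m A B hBA n hn⟩
  left_inv := by
    have : (ContinuousMap.mk (gFun m A B hBA n hn) (gFun_cont m A B hBA n hn)).comp
        ⟨eFun m A B hBA n hn, eFun_cont m A B hBA n hn⟩ = ContinuousMap.id _ :=
      ContinuousMap.ext (g_comp_e m A B hBA n hn)
    rw [this]
  right_inv := by
    refine (ContinuousMap.Homotopic.symm ⟨?_⟩)
    exact
      { toContinuousMap := HMap m A B hBA n hn
        map_zero_left := HMap_zero m A B hBA n hn
        map_one_left := fun x => HMap_one m A B hBA n hn x }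

end Config


end ConfigAux



/-- For `m ≥ 2` and `n ≥ 1`, the inclusion `G(S^m; A, B, n−1) ↪ G(S^m; A, A, n)`
obtained as the fiber over `B` of the fibration `(x_1,...,x_n) ↦ x_n` over the
contractible base `S^m − {A}` (i.e. `(x_1,...,x_{n-1}) ↦ (x_1,...,x_{n-1}, B)`)
is a homotopy equivalence. -/
theorem inclusion_homotopy_equiv (m n : ℕ) (hm : 2 ≤ m) (hn : 1 ≤ n)
    (A B : Metric.sphere (0 : EuclideanSpace ℝ (Fin (m + 1))) 1) (hAB : A ≠ B) :
    ∃ e : ContinuousMap.HomotopyEquiv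
      {y : Fin (n - 1) → Metric.sphere (0 : EuclideanSpace ℝ (Fin (m + 1))) 1 //
        (∀ h : 0 < n - 1, y ⟨0, h⟩ ≠ A) ∧
        (∀ h : 0 < n - 1, y ⟨n - 2, by omega⟩ ≠ B) ∧
        (∀ i : ℕ, ∀ h : i + 1 < n - 1, y ⟨i, by omega⟩ ≠ y ⟨i + 1, h⟩)}
      {x : Fin n → Metric.sphere (0 : EuclideanSpace ℝ (Fin (m + 1))) 1 //
        x ⟨0, by omega⟩ ≠ A ∧ x ⟨n - 1, by omega⟩ ≠ A ∧
        (∀ i : ℕ, ∀ h : i + 1 < n, x ⟨i, by omega⟩ ≠ x ⟨i + 1, h⟩)},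
      ∀ y, ∀ i : Fin n,
        ((e.toFun y).1 i) = if h : (i : ℕ) < n - 1 then y.1 ⟨i, h⟩ else B := by
  exact ⟨ConfigAux.theEquiv m A B (Ne.symm hAB) n hn, fun y i => rfl⟩
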